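/- Let n ≥ k ≥ 1 be integers, let m ≤ n, and let X_1, …, X_m be exchangeable nonnegative integer-valued random variables. Then there exists a constant C depending only on k (not on n, m, or the law) such that E[( (1/m) Σ_{j=1}^m X_j )^k] ≤ C ( Σ_{k'=1}^{k−1} m^{k'−k} E[X_1^{k} X_2^{k} ⋯ X_{k'}^{k}] + E[X_1 X_2 ⋯ X_k] ), where for k' < k the expectation E[X_1^k ⋯ X_{k'}^k] involves the joint moments bounded by replacing each exponent by k. (More precisely: expanding by the multinomial formula, the terms with exactly k' distinct indices are bounded by p(k',k) k! m^{k'} E[Π_{i=1}^{k'} X_i^{q_i}] with Σ q_i = k, and each such expectation is at most E[Π_{i=1}^{k'} X_i^{k}].) -/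

import Mathlib

open MeasureTheory Finset

lemma exists_perm_maps {α : Type*} [Fintype α] [DecidableEq α] (s t : Finset α)
    (h : s.card = t.card) : ∃ σ : Equiv.Perm α, ∀ x, x ∈ s ↔ σ x ∈ t := by
  classical
  have e : {x // x ∈ s} ≃ {x // x ∈ t} :=
    Fintype.equivOfCardEq (by simp [Fintype.card_coe, h])
  have e' : {x // ¬ x ∈ s} ≃ {x // ¬ x ∈ t} :=
    Fintype.equivOfCardEq (by
      rw [Fintype.card_subtype_compl, Fintype.card_subtype_compl]
      simp [Fintype.card_coe, h])
  refine ⟨(Equiv.sumCompl (· ∈ s)).symm.trans ((Equiv.sumCongr e e').trans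
    (Equiv.sumCompl (· ∈ t))), fun x => ?_⟩
  by_cases hx : x ∈ s
  · simp [hx, Equiv.sumCompl_symm_apply_of_pos hx, (e ⟨x, hx⟩).2]
  · simp [hx, Equiv.sumCompl_symm_apply_of_neg hx, (e' ⟨x, hx⟩).2]

variable {m : ℕ} {Ω : Type} [MeasurableSpace Ω] {P : Measure Ω}

lemma lintegral_comp_exchangeable
    (X : Fin m → Ω → ℕ) (hX : ∀ i, Measurable (X i))
    (hE : ∀ σ : Equiv.Perm (Fin m),
      Measure.map (fun ω => fun i => X (σ i) ω) P =
        Measure.map (fun ω => fun i => X i ω) P)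
    (σ : Equiv.Perm (Fin m)) (F : (Fin m → ℕ) → ENNReal) :
    ∫⁻ ω, F (fun i => X (σ i) ω) ∂P = ∫⁻ ω, F (fun i => X i ω) ∂P := by
  have hF : Measurable F := measurable_of_countable F
  have hY : Measurable (fun ω => fun i => X i ω) :=
    measurable_pi_lambda _ (fun i => hX i)
  have hYσ : Measurable (fun ω => fun i => X (σ i) ω) :=
    measurable_pi_lambda _ (fun i => hX (σ i))
  rw [← lintegral_map hF hYσ, ← lintegral_map hF hY, hE σ]

lemma lintegral_prod_pow_congr
    (X : Fin m → Ω → ℕ) (hX : ∀ i, Measurable (X i))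
    (hE : ∀ σ : Equiv.Perm (Fin m),
      Measure.map (fun ω => fun i => X (σ i) ω) P =
        Measure.map (fun ω => fun i => X i ω) P)
    (e : ℕ) (s t : Finset (Fin m)) (hst : s.card = t.card) :
    ∫⁻ ω, ∏ j ∈ s, (X j ω : ENNReal) ^ e ∂P
      = ∫⁻ ω, ∏ j ∈ t, (X j ω : ENNReal) ^ e ∂P := by
  obtain ⟨σ, hσ⟩ := exists_perm_maps s t hst
  have key := lintegral_comp_exchangeable X hX hE σ
    (fun f => ∏ j ∈ s, (f j : ENNReal) ^ e)
  rw [← key]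
  refine lintegral_congr fun ω => ?_
  refine Finset.prod_nbij (fun x => σ x) (fun x hx => (hσ x).1 hx)
    (fun a _ b _ hab => σ.injective hab) (fun y hy => ?_) (fun x _ => rfl)
  exact ⟨σ.symm y, by simpa [hσ (σ.symm y)] using hy, by simp⟩

lemma cast_pow_le_cast_pow (a : ℕ) {c k : ℕ} (hc : 1 ≤ c) (hck : c ≤ k) :
    (a : ENNReal) ^ c ≤ (a : ENNReal) ^ k := by
  rcases Nat.eq_zero_or_pos a with h | h
  · subst h
    simp only [Nat.cast_zero, zero_pow (by omega : c ≠ 0), zero_pow (by omega : k ≠ 0), le_refl]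
  · exact pow_le_pow_right₀ (by exact_mod_cast h) hck

lemma prod_comp_le {k : ℕ} (g : Fin k → Fin m) (a : Fin m → ℕ) :
    (∏ i : Fin k, (a (g i) : ENNReal)) ≤ ∏ j ∈ Finset.univ.image g, (a j : ENNReal) ^ k := by
  classical
  rw [Finset.prod_comp (fun j => ((a j : ℕ) : ENNReal)) g]
  apply Finset.prod_le_prod (fun j _ => zero_le)
  intro j hj
  have h1 : 1 ≤ #{i ∈ (univ : Finset (Fin k)) | g i = j} := by
    obtain ⟨i, _, hi⟩ := Finset.mem_image.1 hj
    exact Finset.card_pos.2 ⟨i, Finset.mem_filter.2 ⟨Finset.mem_univ i, hi⟩⟩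
  have h2 : #{i ∈ (univ : Finset (Fin k)) | g i = j} ≤ k :=
    (Finset.card_filter_le univ _).trans_eq (Finset.card_fin k)
  exact cast_pow_le_cast_pow _ h1 h2

lemma count_fiber {k c : ℕ} (hc : c ≤ k) :
    #{g ∈ (univ : Finset (Fin k → Fin m)) | #(Finset.univ.image g) = c}
      ≤ m ^ c * k ^ k := by
  classical
  have hsub : {g ∈ (univ : Finset (Fin k → Fin m)) | #(Finset.univ.image g) = c}
      ⊆ (Finset.univ.powersetCard c).biUnion
        (fun S => Fintype.piFinset (fun _ : Fin k => S)) := by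
    intro g hg
    rw [Finset.mem_filter] at hg
    refine Finset.mem_biUnion.2 ⟨Finset.univ.image g,
      Finset.mem_powersetCard.2 ⟨Finset.subset_univ _, hg.2⟩, ?_⟩
    exact Fintype.mem_piFinset.2 fun i => Finset.mem_image_of_mem g (Finset.mem_univ i)
  calc #{g ∈ (univ : Finset (Fin k → Fin m)) | #(Finset.univ.image g) = c}
      ≤ _ := Finset.card_le_card hsub
    _ ≤ ∑ S ∈ Finset.univ.powersetCard c, #(Fintype.piFinset (fun _ : Fin k => S)) :=
        Finset.card_biUnion_le
    _ ≤ ∑ S ∈ Finset.univ.powersetCard c, k ^ k := by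
        refine Finset.sum_le_sum fun S hS => ?_
        rw [Fintype.card_piFinset]
        have : #S = c := (Finset.mem_powersetCard.1 hS).2
        calc ∏ _i : Fin k, #S = c ^ k := by simp [this]
          _ ≤ k ^ k := Nat.pow_le_pow_left hc k
    _ = (Nat.choose m c) * k ^ k := by
        rw [Finset.sum_const, smul_eq_mul]
        congr 1
        simpa using Finset.card_powersetCard c (univ : Finset (Fin m))
    _ ≤ m ^ c * k ^ k := Nat.mul_le_mul_right _ (Nat.choose_le_pow m c)

/-- Moment bound for averages of exchangeable nonnegative integer-valued random
variables: there is a constant `C` depending only on `k` such that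
`E[((1/m) Σ_j X_j)^k] ≤ C (Σ_{k'=1}^{k-1} m^{k'-k} E[X_1^k ⋯ X_{k'}^k] + E[X_1 ⋯ X_k])`. -/
theorem exchangeable_average_moment_bound (k : ℕ) (hk : 1 ≤ k) :
    ∃ C : ENNReal, C ≠ ⊤ ∧ 0 < C ∧
      ∀ (n m : ℕ) (hm : k ≤ m), m ≤ n → k ≤ n →
      ∀ (Ω : Type) [MeasurableSpace Ω] (P : Measure Ω), IsProbabilityMeasure P →
      ∀ (X : Fin m → Ω → ℕ), (∀ i, Measurable (X i)) →
      (∀ σ : Equiv.Perm (Fin m),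
        Measure.map (fun ω => fun i => X (σ i) ω) P =
          Measure.map (fun ω => fun i => X i ω) P) →
      (∫⁻ ω, ((m : ENNReal)⁻¹ * ∑ j, (X j ω : ENNReal)) ^ k ∂P) ≤
        C * ((∑ k' ∈ Finset.Icc 1 (k - 1), (m : ENNReal) ^ ((k' : ℤ) - (k : ℤ)) *
                ∫⁻ ω, (∏ i ∈ Finset.range k',
                  ((X ⟨i % m, Nat.mod_lt i (by omega)⟩ ω : ENNReal)) ^ k) ∂P)
          + ∫⁻ ω, (∏ i : Fin k, ((X (Fin.castLE hm i) ω : ENNReal))) ∂P) := by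
  classical
  refine ⟨(k : ENNReal) ^ k, by simp, ?_, ?_⟩
  · exact ENNReal.pow_pos (by exact_mod_cast hk) k
  intro n m hm hmn hkn Ω _ P hP X hX hE
  have hm0 : 0 < m := lt_of_lt_of_le hk hm
  have hmne : (m : ENNReal) ≠ 0 := by exact_mod_cast hm0.ne'
  have hmnetop : (m : ENNReal) ≠ ⊤ := ENNReal.natCast_ne_top m
  -- canonical index sets
  set Tset : ℕ → Finset (Fin m) := fun c => {j : Fin m | (j : ℕ) < c} with hTset
  have hTcard : ∀ c, c ≤ m → #(Tset c) = c := by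
    intro c hc
    rw [← Finset.card_range c]
    apply Finset.card_bij (fun (j : Fin m) _ => (j : ℕ))
    · intro a ha
      simp only [hTset, Finset.mem_filter, Finset.mem_univ, true_and,
        Finset.mem_coe] at ha
      simpa [Finset.mem_range] using ha
    · intro a _ b _ h
      exact Fin.ext h
    · intro b hb
      rw [Finset.mem_range] at hb
      exact ⟨⟨b, lt_of_lt_of_le hb hc⟩, by simp [hTset, hb], rfl⟩
  set A : ℕ → ENNReal := fun c => ∫⁻ ω, ∏ j ∈ Tset c, (X j ω : ENNReal) ^ k ∂P with hA
  set B : ENNReal := ∫⁻ ω, ∏ i : Fin k, (X (Fin.castLE hm i) ω : ENNReal) ∂P with hB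
  set I : (Fin k → Fin m) → ENNReal :=
    fun g => ∫⁻ ω, ∏ i : Fin k, (X (g i) ω : ENNReal) ∂P with hI
  have hmeas : ∀ g : Fin k → Fin m,
      Measurable (fun ω => ∏ i : Fin k, (X (g i) ω : ENNReal)) := by
    intro g
    exact Finset.measurable_prod _ fun i _ => measurable_from_nat.comp (hX (g i))
  -- Step 1 : expansion
  have step1 : (∫⁻ ω, ((m : ENNReal)⁻¹ * ∑ j, (X j ω : ENNReal)) ^ k ∂P)
      = ((m : ENNReal) ^ k)⁻¹ * ∑ g : Fin k → Fin m, I g := by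
    have expand : ∀ ω, ((m : ENNReal)⁻¹ * ∑ j, (X j ω : ENNReal)) ^ k
        = ((m : ENNReal) ^ k)⁻¹ *
            ∑ g : Fin k → Fin m, ∏ i : Fin k, (X (g i) ω : ENNReal) := by
      intro ω
      rw [mul_pow, ← ENNReal.inv_pow]
      congr 1
      have : (∑ j, (X j ω : ENNReal)) ^ k
          = ∏ _i : Fin k, ∑ j ∈ Finset.univ, (X j ω : ENNReal) := by
        simp
      rw [this, Finset.prod_univ_sum]
      simp [Fintype.piFinset_univ]
    simp_rw [expand]
    rw [lintegral_const_mul' _ _ (by simp [ENNReal.inv_ne_top, hmne] :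
      ((m : ENNReal) ^ k)⁻¹ ≠ ⊤)]
    rw [lintegral_finset_sum _ fun g _ => hmeas g]
  -- Step 2 : per-function bounds
  have hI_le : ∀ g : Fin k → Fin m, I g ≤ A #(Finset.univ.image g) := by
    intro g
    have hcm : #(Finset.univ.image g) ≤ m :=
      (Finset.card_le_univ _).trans_eq (by simp)
    calc I g ≤ ∫⁻ ω, ∏ j ∈ Finset.univ.image g, (X j ω : ENNReal) ^ k ∂P :=
          lintegral_mono fun ω => prod_comp_le g (fun j => X j ω)
      _ = A #(Finset.univ.image g) :=
          lintegral_prod_pow_congr X hX hE k _ _ (by rw [hTcard _ hcm])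
  have hI_inj : ∀ g : Fin k → Fin m, Function.Injective g → I g = B := by
    intro g hg
    have h1 : I g = ∫⁻ ω, ∏ j ∈ Finset.univ.image g, (X j ω : ENNReal) ^ 1 ∂P := by
      refine lintegral_congr fun ω => ?_
      simp_rw [pow_one]
      rw [Finset.prod_image (fun a _ b _ h => hg h)]
    have h2 : B = ∫⁻ ω, ∏ j ∈ Finset.univ.image (Fin.castLE hm),
        (X j ω : ENNReal) ^ 1 ∂P := by
      refine lintegral_congr fun ω => ?_
      simp_rw [pow_one]
      rw [Finset.prod_image (fun a _ b _ h => Fin.castLE_injective hm h)]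
    rw [h1, h2]
    refine lintegral_prod_pow_congr X hX hE 1 _ _ ?_
    rw [Finset.card_image_of_injective _ hg,
      Finset.card_image_of_injective _ (Fin.castLE_injective hm)]
  -- Step 3 : sum over fibers
  have himage_mem : ∀ g : Fin k → Fin m,
      #(Finset.univ.image g) ∈ Finset.Icc 1 k := by
    intro g
    refine Finset.mem_Icc.2 ⟨?_, ?_⟩
    · refine Finset.card_pos.2 ⟨g ⟨0, hk⟩, Finset.mem_image_of_mem g (Finset.mem_univ _)⟩
    · exact (Finset.card_image_le).trans_eq (by simp)
  have hsum : ∑ g : Fin k → Fin m, I g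
      ≤ (∑ c ∈ Finset.Icc 1 (k - 1), ((m ^ c * k ^ k : ℕ) : ENNReal) * A c)
          + ((m ^ k : ℕ) : ENNReal) * B := by
    rw [← Finset.sum_fiberwise_of_maps_to (fun g _ => himage_mem g) I]
    have hk1 : k - 1 + 1 = k := Nat.succ_pred_eq_of_pos hk
    rw [show Finset.Icc 1 k = Finset.Icc 1 (k - 1 + 1) from by rw [hk1],
      Finset.sum_Icc_succ_top (by omega), hk1]
    gcongr with c hc
    · -- c ∈ Icc 1 (k-1)
      have hck : c ≤ k := by
        have := (Finset.mem_Icc.1 hc).2; omega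
      calc ∑ g ∈ {g ∈ (Finset.univ : Finset (Fin k → Fin m)) |
              #(Finset.univ.image g) = c}, I g
          ≤ ∑ g ∈ {g ∈ (Finset.univ : Finset (Fin k → Fin m)) |
              #(Finset.univ.image g) = c}, A c := by
            refine Finset.sum_le_sum fun g hg => ?_
            have := (Finset.mem_filter.1 hg).2
            simpa [this] using hI_le g
        _ = (#{g ∈ (Finset.univ : Finset (Fin k → Fin m)) |
              #(Finset.univ.image g) = c} : ENNReal) * A c := by
            rw [Finset.sum_const, nsmul_eq_mul]
        _ ≤ ((m ^ c * k ^ k : ℕ) : ENNReal) * A c := by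
            gcongr
            exact_mod_cast count_fiber hck
    · -- c = k : injective case
      calc ∑ g ∈ {g ∈ (Finset.univ : Finset (Fin k → Fin m)) |
              #(Finset.univ.image g) = k}, I g
          = ∑ g ∈ {g ∈ (Finset.univ : Finset (Fin k → Fin m)) |
              #(Finset.univ.image g) = k}, B := by
            refine Finset.sum_congr rfl fun g hg => ?_
            have hcard := (Finset.mem_filter.1 hg).2
            have hginj : Function.Injective g := by
              have hcard' : #(Finset.univ.image g) = #(Finset.univ : Finset (Fin k)) := by
                simp [hcard]
              have := Finset.card_image_iff.1 hcard'
              intro a b hab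
              exact this (Finset.mem_coe.2 (Finset.mem_univ a))
                (Finset.mem_coe.2 (Finset.mem_univ b)) hab
            exact hI_inj g hginj
        _ ≤ ((m ^ k : ℕ) : ENNReal) * B := by
            rw [Finset.sum_const, nsmul_eq_mul]
            gcongr
            have : #{g ∈ (Finset.univ : Finset (Fin k → Fin m)) |
                #(Finset.univ.image g) = k} ≤ m ^ k := by
              refine (Finset.card_filter_le _ _).trans ?_
              simp [Fintype.card_fun]
            exact_mod_cast this
  -- Step 4 : combine
  have hzpow : ∀ c : ℕ, ((m : ENNReal) ^ c) * ((m : ENNReal) ^ k)⁻¹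
      = (m : ENNReal) ^ ((c : ℤ) - (k : ℤ)) := by
    intro c
    rw [sub_eq_add_neg, ENNReal.zpow_add hmne hmnetop,
      ENNReal.zpow_neg, zpow_natCast, zpow_natCast]
  have hAc : ∀ c ∈ Finset.Icc 1 (k - 1),
      A c = ∫⁻ ω, (∏ i ∈ Finset.range c,
        ((X ⟨i % m, Nat.mod_lt i (by omega)⟩ ω : ENNReal)) ^ k) ∂P := by
    intro c hc
    have hck : c < m := by
      have := (Finset.mem_Icc.1 hc).2; omega
    refine lintegral_congr fun ω => ?_
    refine (Finset.prod_nbij (fun i => (⟨i % m, Nat.mod_lt i (by omega)⟩ : Fin m))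
      ?_ ?_ ?_ ?_).symm
    · intro i hi
      rw [Finset.mem_range] at hi
      have : i % m = i := Nat.mod_eq_of_lt (by omega)
      simp [hTset, this, hi]
    · intro a ha b hb hab
      simp only [Finset.coe_range, Set.mem_Iio] at ha hb
      have h1 : a % m = a := Nat.mod_eq_of_lt (by omega)
      have h2 : b % m = b := Nat.mod_eq_of_lt (by omega)
      have := congrArg Fin.val hab
      simpa [h1, h2] using this
    · intro j hj
      simp only [hTset, Finset.coe_filter, Finset.mem_univ, true_and,
        Set.mem_setOf_eq] at hj
      refine ⟨(j : ℕ), by simpa using hj, Fin.ext ?_⟩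
      simp [Nat.mod_eq_of_lt j.isLt]
    · intro i _
      rfl
  have hkk1 : (1 : ENNReal) ≤ (k : ENNReal) ^ k :=
    one_le_pow_of_one_le' (by exact_mod_cast hk) k
  have hfinal : ((m : ENNReal) ^ k)⁻¹ *
        ((∑ c ∈ Finset.Icc 1 (k - 1), ((m ^ c * k ^ k : ℕ) : ENNReal) * A c)
          + ((m ^ k : ℕ) : ENNReal) * B)
      ≤ (k : ENNReal) ^ k *
        ((∑ c ∈ Finset.Icc 1 (k - 1), (m : ENNReal) ^ ((c : ℤ) - (k : ℤ)) * A c) + B) := by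
    rw [mul_add, Finset.mul_sum, mul_add, Finset.mul_sum]
    refine add_le_add (Finset.sum_le_sum fun c hc => ?_) ?_
    · have : ((m : ENNReal) ^ k)⁻¹ * (((m ^ c * k ^ k : ℕ) : ENNReal) * A c)
          = (k : ENNReal) ^ k * ((m : ENNReal) ^ c * ((m : ENNReal) ^ k)⁻¹ * A c) := by
        push_cast
        ring
      rw [this, hzpow c]
    · have : ((m : ENNReal) ^ k)⁻¹ * (((m ^ k : ℕ) : ENNReal) * B) = B := by
        push_cast
        rw [← mul_assoc, ENNReal.inv_mul_cancel (pow_ne_zero _ hmne)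
          (ENNReal.pow_ne_top hmnetop), one_mul]
      rw [this]
      exact le_mul_of_one_le_left' hkk1
  rw [step1]
  refine le_trans (mul_le_mul_right hsum _) (hfinal.trans_eq ?_)
  congr 1
  congr 1
  exact Finset.sum_congr rfl fun c hc => by rw [hAc c hc]
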